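/- Let R be a valuation domain, Λ an index set, and L a prime ideal of R. If R^Λ is a separable R-module, then (R_L)^Λ is a separable R_L-module. -/

import Mathlib

open Pointwise

section Defs
universe u v
variable (R : Type u) [CommRing R]

/-- `U` is a pure submodule of its ambient module: `rU = U ∩ rM` for all `r`. -/
def IsPureSub {M : Type v} [AddCommGroup M] [Module R M] (U : Submodule R M) : Prop :=
  ∀ (r : R) (x : M), x ∈ U → (∃ m : M, r • m = x) → ∃ u ∈ U, r • u = x

/-- `U` is uniserial: its submodules are totally ordered by inclusion. -/
def IsUniserialSub {M : Type v} [AddCommGroup M] [Module R M] (U : Submodule R M) : Prop :=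
  ∀ A B : Submodule R ↥U, A ≤ B ∨ B ≤ A

/-- `U` is a direct summand of its ambient module. -/
def IsSummand {M : Type v} [AddCommGroup M] [Module R M] (U : Submodule R M) : Prop :=
  ∃ V : Submodule R M, IsCompl U V

/-- A (torsion-free) module is separable if every pure uniserial submodule is a summand. -/
def IsSeparableMod (M : Type v) [AddCommGroup M] [Module R M] : Prop :=
  ∀ U : Submodule R M, IsPureSub R U → IsUniserialSub R U → IsSummand R U

/-- `R/A` is complete in the `R/A`-topology: every coherent family of cosets
`(aᵢ + Bᵢ)` with `⋂ᵢ Bᵢ = A` has a common point. -/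
def IsCompleteQuot (A : Ideal R) : Prop :=
  ∀ (ι : Type u) (a : ι → R) (B : ι → Ideal R),
    (∀ i, A ≤ B i) → (∀ i j, B i ≤ B j → a i - a j ∈ B j) → (⨅ i, B i) = A →
    ∃ c : R, ∀ i, c - a i ∈ B i

/-- A valuation ring with maximal ideal `P` is maximal: `R/A` is complete in the
`R/A`-topology for every proper ideal `A` with `A ≠ Pa` for all nonzero `a`. -/
def IsMaximalVD (P : Ideal R) : Prop :=
  ∀ A : Ideal R, A ≠ ⊤ → (∀ a : R, a ≠ 0 → A ≠ Ideal.span {a} * P) → IsCompleteQuot R A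

/-- A module `M` is slender if every homomorphism `R^ℕ → M` kills almost all
standard unit vectors. -/
def IsSlender (M : Type v) [AddCommGroup M] [Module R M] : Prop :=
  ∀ f : ((ℕ → R) →ₗ[R] M), ∃ n₀ : ℕ, ∀ n ≥ n₀, f (Pi.single n 1) = 0

end Defs

section Aux

universe u v

/-- Pairwise comparability of elements implies uniseriality. -/
theorem isUniserialSub_of_pairwise {R : Type u} [CommRing R] {M : Type v} [AddCommGroup M]
    [Module R M] (W : Submodule R M)
    (hcomp : ∀ x ∈ W, ∀ y ∈ W, (∃ c : R, c • y = x) ∨ (∃ c : R, c • x = y)) :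
    IsUniserialSub R W := by
  intro A B
  by_cases hAB : A ≤ B
  · exact Or.inl hAB
  · right
    obtain ⟨a, haA, haB⟩ := SetLike.not_le_iff_exists.mp hAB
    intro b hbB
    rcases hcomp (a : M) a.2 (b : M) b.2 with ⟨c, hc⟩ | ⟨c, hc⟩
    · exact absurd (by
        have : a = c • b := Subtype.ext (by simpa using hc.symm)
        exact this ▸ B.smul_mem c hbB) haB
    · have : b = c • a := Subtype.ext (by simpa using hc.symm)
      exact this ▸ A.smul_mem c haA

/-- In a uniserial submodule any two elements are comparable. -/
theorem pairwise_of_isUniserialSub {S : Type u} [CommRing S] {M : Type v} [AddCommGroup M]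
    [Module S M] (U : Submodule S M) (hU : IsUniserialSub S U) :
    ∀ x ∈ U, ∀ y ∈ U, (∃ c : S, c • y = x) ∨ (∃ c : S, c • x = y) := by
  intro x hx y hy
  rcases hU (Submodule.span S {(⟨x, hx⟩ : U)}) (Submodule.span S {(⟨y, hy⟩ : U)}) with hle | hle
  · left
    have := hle (Submodule.mem_span_singleton_self (⟨x, hx⟩ : U))
    obtain ⟨c, hc⟩ := Submodule.mem_span_singleton.mp this
    exact ⟨c, by simpa using congrArg Subtype.val hc⟩
  · right
    have := hle (Submodule.mem_span_singleton_self (⟨y, hy⟩ : U))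
    obtain ⟨c, hc⟩ := Submodule.mem_span_singleton.mp this
    exact ⟨c, by simpa using congrArg Subtype.val hc⟩

end Aux

/-- if `R^Λ` is a separable `R`-module then `(R_L)^Λ` is a separable
`R_L`-module, for every prime `L`. -/
theorem stmt_6 {R : Type u} [CommRing R] [IsDomain R] [ValuationRing R]
    (Λ : Type u) (L : Ideal R) [L.IsPrime]
    (h : IsSeparableMod R (Λ → R)) :
    IsSeparableMod (Localization.AtPrime L) (Λ → Localization.AtPrime L) := by
  classical
  set S := Localization.AtPrime L with hS
  haveI : IsDomain S := IsLocalization.isDomain_of_local_atPrime (inferInstance : L.IsPrime)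
  set f : R →+* S := algebraMap R S with hf
  have hfinj : Function.Injective f := IsLocalization.injective S L.primeCompl_le_nonZeroDivisors
  have hfr : ∀ r : R, r ≠ 0 → (f r : S) ≠ 0 := by
    intro r hr he
    exact hr (hfinj (by simpa using he))
  -- cancellation in `Λ → S` and `Λ → R`
  have hcanS : ∀ (s : S), s ≠ 0 → ∀ (y y' : Λ → S), s • y = s • y' → y = y' := by
    intro s hs y y' hyy
    funext i
    have := congrFun hyy i
    simp only [Pi.smul_apply, smul_eq_mul] at this
    exact mul_left_cancel₀ hs this
  have hcanR : ∀ (r : R), r ≠ 0 → ∀ (x x' : Λ → R), r • x = r • x' → x = x' := by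
    intro r hr x x' hxx
    funext i
    have := congrFun hxx i
    simp only [Pi.smul_apply, smul_eq_mul] at this
    exact mul_left_cancel₀ hr this
  intro U hpU huU
  by_cases hL : L = ⊥
  · -- localization at `⊥` is a field; every subspace is a summand
    have hfield : IsField S := by
      refine ⟨⟨0, 1, fun e => one_ne_zero (hfinj (by simpa using e.symm))⟩, mul_comm, ?_⟩
      intro σ hσ
      obtain ⟨⟨a, t⟩, ht''⟩ := IsLocalization.surj L.primeCompl σ
      have ht : σ * f (t : R) = f a := ht''
      have ha : a ≠ 0 := by
        rintro rfl
        apply hσ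
        obtain ⟨w, hw''⟩ := IsLocalization.map_units S t
        have hw : (↑w : S) = f (t : R) := hw''
        simp only [map_zero] at ht
        calc σ = σ * (↑w * ↑w⁻¹) := by rw [w.mul_inv, mul_one]
          _ = (σ * f (t : R)) * ↑w⁻¹ := by rw [hw]; ring
          _ = 0 := by rw [ht]; ring
      have haL : a ∉ L := by rw [hL, Ideal.mem_bot]; exact ha
      have hau : IsUnit (f a) := IsLocalization.map_units S (⟨a, haL⟩ : L.primeCompl)
      obtain ⟨u, hu''⟩ := hau
      have hu : (↑u : S) = f a := hu''
      refine ⟨↑u⁻¹ * f (t : R), ?_⟩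
      calc σ * (↑u⁻¹ * f (t : R)) = (σ * f (t : R)) * ↑u⁻¹ := by ring
        _ = ↑u * ↑u⁻¹ := by rw [ht, hu]
        _ = 1 := u.mul_inv
    letI : Field S := hfield.toField
    exact U.exists_isCompl
  · -- main case
    obtain ⟨l, hlL, hl0⟩ := Submodule.ne_bot_iff L |>.mp hL
    have hfl0 : (f l : S) ≠ 0 := hfr l hl0
    -- key divisibility: `l • S ⊆ R`
    have keydiv : ∀ s : S, ∃ r : R, f r = f l * s := by
      intro s
      obtain ⟨⟨a, t⟩, ht''⟩ := IsLocalization.surj L.primeCompl s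
      have ht : s * f (t : R) = f a := ht''
      have htl : (t : R) ∣ l := by
        rcases ValuationRing.dvd_total (t : R) l with hd | hd
        · exact hd
        · obtain ⟨d, hdd⟩ := hd
          exact absurd (show (t : R) ∈ L by rw [hdd]; exact L.mul_mem_right d hlL) t.2
      obtain ⟨d, hd⟩ := htl
      refine ⟨d * a, ?_⟩
      obtain ⟨w, hw''⟩ := IsLocalization.map_units S t
      have hw : (↑w : S) = f (t : R) := hw''
      have e1 : (↑w : S) * f (d * a) = ↑w * (f l * s) := by
        rw [hw, ← map_mul]
        have : (t : R) * (d * a) = l * a := by rw [hd]; ring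
        rw [this, map_mul, ← ht]
        ring
      exact mul_left_cancel₀ w.ne_zero e1
    -- the pullback submodule W = φ⁻¹(U)
    have hsmul_img : ∀ (r : R) (m : Λ → R),
        (fun i => f ((r • m) i)) = f r • fun i => f (m i) := by
      intro r m
      funext i
      simp [Pi.smul_apply, smul_eq_mul, map_mul]
    let W : Submodule R (Λ → R) :=
      { carrier := {m | (fun i => f (m i)) ∈ U}
        add_mem' := by
          intro a b ha hb
          have : (fun i => f ((a + b) i)) = (fun i => f (a i)) + fun i => f (b i) := by
            funext i; simp [map_add]
          show (fun i => f ((a + b) i)) ∈ U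
          rw [this]; exact U.add_mem ha hb
        zero_mem' := by
          show (fun i => f ((0 : Λ → R) i)) ∈ U
          have : (fun i => f ((0 : Λ → R) i)) = (0 : Λ → S) := by funext i; simp
          rw [this]; exact U.zero_mem
        smul_mem' := by
          intro r m hm
          show (fun i => f ((r • m) i)) ∈ U
          rw [hsmul_img]
          exact U.smul_mem (f r) hm }
    have hWmem : ∀ m : Λ → R, m ∈ W ↔ (fun i => f (m i)) ∈ U := fun m => Iff.rfl
    -- W is pure
    have hWpure : IsPureSub R W := by
      rintro r x hx ⟨mm, hmm⟩
      by_cases hr : r = 0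
      · refine ⟨0, W.zero_mem, ?_⟩
        rw [← hmm, hr, zero_smul, zero_smul]
      · have hdiv : ∃ z : Λ → S, f r • z = fun i => f (x i) :=
          ⟨fun i => f (mm i), by rw [← hsmul_img, hmm]⟩
        obtain ⟨u, huU, hu⟩ := hpU (f r) _ ((hWmem x).mp hx) hdiv
        have hueq : u = fun i => f (mm i) := by
          apply hcanS (f r) (hfr r hr)
          rw [hu, ← hsmul_img, hmm]
        refine ⟨mm, ?_, hmm⟩
        rw [hWmem, ← hueq]
        exact huU
    -- W is uniserial
    have hWuni : IsUniserialSub R W := by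
      apply isUniserialSub_of_pairwise
      intro x hx y hy
      have hcomp := pairwise_of_isUniserialSub U huU _ ((hWmem x).mp hx) _ ((hWmem y).mp hy)
      have main : ∀ (x y : Λ → R), (∃ σ : S, σ • (fun i => f (y i)) = fun i => f (x i)) →
          (∃ c : R, c • y = x) ∨ (∃ c : R, c • x = y) := by
        rintro x y ⟨σ, hσ⟩
        obtain ⟨⟨a, t⟩, ht''⟩ := IsLocalization.surj L.primeCompl σ
        have ht : σ * f (t : R) = f a := ht''
        have ht0 : (t : R) ≠ 0 := by
          rintro he
          exact t.2 (by rw [he]; exact L.zero_mem)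
        have key : (a • y : Λ → R) = (↑t : R) • x := by
          apply funext; intro i
          apply hfinj
          have hσi := congrFun hσ i
          simp only [Pi.smul_apply, smul_eq_mul] at hσi ⊢
          calc f (a * y i) = f a * f (y i) := map_mul f _ _
            _ = (σ * f (t : R)) * f (y i) := by rw [ht]
            _ = f (t : R) * (σ * f (y i)) := by ring
            _ = f (t : R) * f (x i) := by rw [hσi]
            _ = f ((t : R) * x i) := (map_mul f _ _).symm
        rcases ValuationRing.dvd_total (t : R) a with ⟨e, he⟩ | ⟨e, he⟩
        · -- a = t * e
          left
          refine ⟨e, hcanR (t : R) ht0 _ _ ?_⟩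
          rw [← key, he]
          funext i
          simp only [Pi.smul_apply, smul_eq_mul]
          ring
        · -- t = a * e
          by_cases ha : a = 0
          · left
            have : ((t : R) • x : Λ → R) = 0 := by rw [← key, ha, zero_smul]
            have hx0 : x = 0 := by
              apply hcanR (t : R) ht0 x 0
              rw [this, smul_zero]
            exact ⟨0, by rw [hx0, zero_smul]⟩
          · right
            refine ⟨e, hcanR a ha _ _ ?_⟩
            rw [key, he]
            funext i
            simp only [Pi.smul_apply, smul_eq_mul]
            ring
      rcases hcomp with hc | hc
      · exact main x y hc
      · exact (main y x hc).symm
    -- apply separability of R^Λ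
    obtain ⟨V, hV⟩ := h W hWpure hWuni
    have hWVdisj : ∀ v : Λ → R, v ∈ W → v ∈ V → v = 0 := by
      intro v h1 h2
      exact (Submodule.mem_bot R).mp (by
        have := hV.1
        rw [disjoint_iff] at this
        rw [← this]
        exact ⟨h1, h2⟩)
    have hWVsup : ∀ m : Λ → R, ∃ w ∈ W, ∃ v ∈ V, w + v = m := by
      intro m
      have : m ∈ W ⊔ V := by
        rw [codisjoint_iff.mp hV.2]
        trivial
      exact Submodule.mem_sup.mp this
    -- the complement of U : saturation of φ(V)
    let V' : Submodule S (Λ → S) :=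
      { carrier := {y | ∃ r : R, r ≠ 0 ∧ ∃ v ∈ V, f r • y = fun i => f (v i)}
        zero_mem' := ⟨1, one_ne_zero, 0, V.zero_mem, by funext i; simp⟩
        add_mem' := by
          rintro y z ⟨r, hr, v, hv, hrv⟩ ⟨r', hr', v', hv', hrv'⟩
          refine ⟨r * r', mul_ne_zero hr hr', r' • v + r • v',
            V.add_mem (V.smul_mem r' hv) (V.smul_mem r hv'), ?_⟩
          funext i
          have h1 := congrFun hrv i
          have h2 := congrFun hrv' i
          simp only [Pi.smul_apply, smul_eq_mul, Pi.add_apply] at h1 h2 ⊢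
          rw [map_add, map_mul, map_mul, map_mul]
          calc f r * f r' * (y i + z i)
              = f r' * (f r * y i) + f r * (f r' * z i) := by ring
            _ = f r' * f (v i) + f r * f (v' i) := by rw [h1, h2]
        smul_mem' := by
          rintro σ y ⟨r, hr, v, hv, hrv⟩
          obtain ⟨⟨a, t⟩, ht''⟩ := IsLocalization.surj L.primeCompl σ
          have ht : σ * f (t : R) = f a := ht''
          have ht0 : (t : R) ≠ 0 := by
            rintro he
            exact t.2 (by rw [he]; exact L.zero_mem)
          refine ⟨r * (t : R), mul_ne_zero hr ht0, a • v, V.smul_mem a hv, ?_⟩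
          funext i
          have h1 := congrFun hrv i
          simp only [Pi.smul_apply, smul_eq_mul] at h1 ⊢
          rw [map_mul]
          calc f r * f (t : R) * (σ * y i)
              = (σ * f (t : R)) * (f r * y i) := by ring
            _ = f a * f (v i) := by rw [ht, h1]
            _ = f (a * v i) := (map_mul f _ _).symm }
    refine ⟨V', ?_⟩
    constructor
    · -- disjoint
      rw [disjoint_iff, eq_bot_iff]
      intro y hy
      obtain ⟨hyU, hyV'⟩ := Submodule.mem_inf.mp hy
      obtain ⟨r, hr, v, hv, hrv⟩ := hyV'
      have hvW : v ∈ W := by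
        rw [hWmem, ← hrv]
        exact U.smul_mem (f r) hyU
      have hv0 : v = 0 := hWVdisj v hvW hv
      have : f r • y = (0 : Λ → S) := by
        rw [hrv, hv0]
        funext i; simp
      have hy0 : y = 0 := by
        apply hcanS (f r) (hfr r hr) y 0
        rw [this, smul_zero]
      rw [hy0]
      exact Submodule.zero_mem ⊥
    · -- codisjoint
      rw [codisjoint_iff, eq_top_iff]
      rintro y -
      -- pull back l • y to R^Λ
      have pull : ∃ m : Λ → R, (fun i => f (m i)) = f l • y := by
        choose m hm using fun i => keydiv (y i)
        exact ⟨m, funext fun i => by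
          simp only [Pi.smul_apply, smul_eq_mul]
          exact hm i⟩
      obtain ⟨m, hm⟩ := pull
      obtain ⟨w, hw, v, hv, hwv⟩ := hWVsup m
      -- all components of w are divisible by l in S
      have hdiv : ∀ i, ∃ s : S, f (w i) = f l * s := by
        by_contra hcon
        push_neg at hcon
        obtain ⟨i₀, hi₀⟩ := hcon
        set c := w i₀ with hc
        have hc0 : c ≠ 0 := by
          rintro he
          exact hi₀ 0 (by rw [he, map_zero, mul_zero])
        have hPm : ∀ i, ∃ t : R, t ∉ L ∧ ∃ d, t * m i = l * d := by
          intro i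
          obtain ⟨⟨a, t⟩, ht''⟩ := IsLocalization.surj L.primeCompl (y i)
          have ht : y i * f (t : R) = f a := ht''
          refine ⟨(t : R), t.2, a, hfinj ?_⟩
          have hmi := congrFun hm i
          simp only [Pi.smul_apply, smul_eq_mul] at hmi
          calc f ((t : R) * m i) = f (t : R) * f (m i) := map_mul f _ _
            _ = f (t : R) * (f l * y i) := by rw [hmi]
            _ = f l * (y i * f (t : R)) := by ring
            _ = f l * f a := by rw [ht]
            _ = f (l * a) := (map_mul f _ _).symm
        -- produce a common divisor b of the mᵢ that does not divide c
        have hbex : ∃ b : R, (∀ i, b ∣ m i) ∧ ¬ b ∣ c := by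
          by_cases hmax : ∃ x : R, x ∉ L ∧ ¬ IsUnit x
          · obtain ⟨x₀, hx₀L, hx₀u⟩ := hmax
            refine ⟨c * x₀, fun i => ?_, ?_⟩
            · rcases ValuationRing.dvd_total (c * x₀) (m i) with hh | ⟨e, he⟩
              · exact hh
              · exfalso
                obtain ⟨t, htL, d, htd⟩ := hPm i
                have htx : t * x₀ ∉ L := by
                  intro hmem
                  rcases (inferInstance : L.IsPrime).mem_or_mem hmem with h' | h'
                  · exact htL h'
                  · exact hx₀L h'
                have heq : (t * x₀) * c = l * (d * e) := by
                  calc (t * x₀) * c = t * (c * x₀) := by ring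
                    _ = t * (m i * e) := by rw [← he]
                    _ = (t * m i) * e := by ring
                    _ = (l * d) * e := by rw [htd]
                    _ = l * (d * e) := by ring
                obtain ⟨u, hu''⟩ := IsLocalization.map_units S
                  (⟨t * x₀, htx⟩ : L.primeCompl)
                have hu : (↑u : S) = f (t * x₀) := hu''
                apply hi₀ (↑u⁻¹ * f (d * e))
                have h2 : (↑u : S) * f c = f l * f (d * e) := by
                  rw [hu, ← map_mul, heq, map_mul]
                calc f c = ↑u⁻¹ * (↑u * f c) := by rw [← mul_assoc, u.inv_mul, one_mul]
                  _ = ↑u⁻¹ * (f l * f (d * e)) := by rw [h2]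
                  _ = f l * (↑u⁻¹ * f (d * e)) := by ring
            · rintro ⟨e, he⟩
              apply hx₀u
              have : c * (x₀ * e - 1) = 0 := by
                calc c * (x₀ * e - 1) = c * x₀ * e - c := by ring
                  _ = 0 := by rw [← he, sub_self]
              rcases mul_eq_zero.mp this with h' | h'
              · exact absurd h' hc0
              · exact IsUnit.of_mul_eq_one e (sub_eq_zero.mp h')
          · push_neg at hmax
            refine ⟨l, fun i => ?_, ?_⟩
            · obtain ⟨t, htL, d, htd⟩ := hPm i
              obtain ⟨u, hu⟩ := hmax t htL
              refine ⟨↑u⁻¹ * d, ?_⟩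
              have : (↑u : R) * m i = l * d := by rw [hu]; exact htd
              calc m i = ↑u⁻¹ * (↑u * m i) := by rw [← mul_assoc, u.inv_mul, one_mul]
                _ = ↑u⁻¹ * (l * d) := by rw [this]
                _ = l * (↑u⁻¹ * d) := by ring
            · rintro ⟨e, he⟩
              exact hi₀ (f e) (by rw [he, map_mul])
        obtain ⟨b, hbd, hbc⟩ := hbex
        choose n hn using hbd
        have hmn : m = b • n := funext fun i => by
          simp only [Pi.smul_apply, smul_eq_mul]
          exact hn i
        obtain ⟨w', hw', v', hv', hw'v'⟩ := hWVsup n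
        have huniq : w = b • w' := by
          have h1 : w + v = b • w' + b • v' := by
            rw [hwv, hmn, ← hw'v', smul_add]
          have h2 : w - b • w' = b • v' - v := by
            rw [sub_eq_sub_iff_add_eq_add, h1]
            abel
          have hmemW : w - b • w' ∈ W := W.sub_mem hw (W.smul_mem b hw')
          have hmemV : w - b • w' ∈ V := by
            rw [h2]
            exact V.sub_mem (V.smul_mem b hv') hv
          have := hWVdisj _ hmemW hmemV
          rw [sub_eq_zero] at this
          exact this
        apply hbc
        refine ⟨w' i₀, ?_⟩
        have := congrFun huniq i₀
        simp only [Pi.smul_apply, smul_eq_mul] at this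
        exact this
      choose z hz using hdiv
      have hφw : (fun i => f (w i)) ∈ U := (hWmem w).mp hw
      obtain ⟨u, huU, hu⟩ := hpU (f l) _ hφw ⟨z, funext fun i => by
        simp only [Pi.smul_apply, smul_eq_mul]
        exact (hz i).symm⟩
      refine Submodule.mem_sup.mpr ⟨u, huU, y - u, ?_, by abel⟩
      refine ⟨l, hl0, v, hv, ?_⟩
      funext i
      have hui := congrFun hu i
      have hmi := congrFun hm i
      simp only [Pi.smul_apply, smul_eq_mul, Pi.sub_apply] at hui hmi ⊢
      have hvi : v i = m i - w i := by
        have h3 := congrFun hwv i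
        simp only [Pi.add_apply] at h3
        rw [← h3]
        ring
      calc f l * (y i - u i) = f l * y i - f l * u i := by ring
        _ = f (m i) - f (w i) := by rw [hmi, hui]
        _ = f (m i - w i) := (map_sub f _ _).symm
        _ = f (v i) := by rw [← hvi]
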